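/- arXiv:1606.09313 — 4 statements merged into one kernel-verified Lean document; each statement's English description precedes it below -/
import Mathlib

section
/- (Weyl inequality, upper form) Let H and V be N×N Hermitian complex matrices, and let λ↓_0(M) ≥ λ↓_1(M) ≥ … ≥ λ↓_{N−1}(M) denote eigenvalues in decreasing order with multiplicity. Then for all indices j, k with 0 ≤ k ≤ j ≤ N−1, one has λ↓_j(H+V) ≤ λ↓_k(H) + λ↓_{j−k}(V). -/
open scoped Matrix.Norms.L2Operator
open scoped InnerProductSpace ComplexOrder

/-- The eigenvalues of a Hermitian matrix, listed in decreasing order (with multiplicity):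
`sortedEigenvaluesDesc hA j` is `λ↓_j`. Out-of-range indices yield the junk value `0`. -/
noncomputable def Matrix.IsHermitian.sortedEigenvaluesDesc {n : Type*} [Fintype n] [DecidableEq n]
    {A : Matrix n n ℂ} (hA : A.IsHermitian) (j : ℕ) : ℝ :=
  ((Finset.univ.val.map hA.eigenvalues).sort (· ≤ ·)).reverse.getD j 0

section Aux

open Finset in
private lemma weyl_sort_eq_ofFn {N : ℕ} (f : Fin N → ℝ) :
    (Finset.univ.val.map f).sort (· ≤ ·) = List.ofFn (f ∘ Tuple.sort f) := by
  have hperm : ((Finset.univ.val.map f).sort (· ≤ ·) : Multiset ℝ)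
      = (List.ofFn (f ∘ Tuple.sort f) : Multiset ℝ) := by
    rw [Multiset.sort_eq, List.ofFn_eq_map]
    have : (Finset.univ.val.map (f ∘ Tuple.sort f)) = Finset.univ.val.map f := by
      rw [← Multiset.map_map]
      congr 1
      have := Finset.map_univ_equiv (Tuple.sort f : Fin N ≃ Fin N)
      calc Multiset.map (⇑(Tuple.sort f)) Finset.univ.val
          = (Finset.univ.map (Tuple.sort f : Fin N ≃ Fin N).toEmbedding).val := by
            rw [Finset.map_val]; rfl
        _ = Finset.univ.val := by rw [this]
    rw [← this]
    simp only [Fin.univ_def]; exact Multiset.coe_eq_coe.mpr (by simp [Function.comp])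
  haveI : IsAntisymm ℝ (· ≤ ·) := ⟨fun _ _ => le_antisymm⟩
  exact List.Perm.eq_of_pairwise' (Multiset.pairwise_sort _ _)
    (List.pairwise_ofFn.mpr fun i j h => Tuple.monotone_sort f h.le) (Multiset.coe_eq_coe.mp hperm)

private lemma weyl_reverse_ofFn {N : ℕ} {α : Type*} (g : Fin N → α) :
    (List.ofFn g).reverse = List.ofFn (g ∘ Fin.rev) := by
  apply List.ext_get
  · simp
  · intro i h1 h2
    rw [List.get_reverse']
    · simp only [List.get_ofFn, Function.comp_apply]
      congr 1
      simp only [List.length_reverse, List.length_ofFn] at h1 ⊢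
      ext
      simp [Fin.rev, Fin.cast]
      omega
    · simp at h1 ⊢; omega

variable {E : Type*} [NormedAddCommGroup E] [InnerProductSpace ℂ E] {N : ℕ}

private lemma weyl_repr_zero_of_mem_span (b : OrthonormalBasis (Fin N) ℂ E) (S : Set (Fin N))
    {x : E} (hx : x ∈ Submodule.span ℂ (b '' S)) {i : Fin N} (hi : i ∉ S) :
    ⟪b i, x⟫_ℂ = 0 := by
  have : Submodule.span ℂ (b '' S) ≤ LinearMap.ker (innerSL ℂ (b i)).toLinearMap := by
    rw [Submodule.span_le]
    rintro _ ⟨j, hj, rfl⟩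
    simp only [SetLike.mem_coe, LinearMap.mem_ker, ContinuousLinearMap.coe_coe, innerSL_apply_apply]
    exact b.orthonormal.2 (fun h => hi (h ▸ hj))
  simpa using this hx

private lemma weyl_rayleigh_formula (b : OrthonormalBasis (Fin N) ℂ E) (μ : Fin N → ℝ)
    (T : E →ₗ[ℂ] E) (hT : ∀ i, T (b i) = (μ i : ℂ) • b i) (x : E) :
    Complex.re ⟪x, T x⟫_ℂ = ∑ i, μ i * Complex.normSq ⟪b i, x⟫_ℂ := by
  have hx : x = ∑ i, ⟪b i, x⟫_ℂ • b i := by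
    simpa [OrthonormalBasis.repr_apply_apply] using (b.sum_repr x).symm
  have hTx : T x = ∑ i, ((μ i : ℂ) * ⟪b i, x⟫_ℂ) • b i := by
    conv_lhs => rw [hx]
    rw [map_sum]
    refine Finset.sum_congr rfl fun i _ => ?_
    rw [map_smul, hT, smul_smul, mul_comm]
  rw [hTx, inner_sum, Complex.re_sum]
  congr 1; ext i
  rw [inner_smul_right, ← inner_conj_symm x (b i)]
  rw [mul_assoc, Complex.mul_conj, ← Complex.ofReal_mul, Complex.ofReal_re]

private lemma weyl_norm_sq_formula (b : OrthonormalBasis (Fin N) ℂ E) (x : E) :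
    ‖x‖ ^ 2 = ∑ i, Complex.normSq ⟪b i, x⟫_ℂ := by
  have := weyl_rayleigh_formula b (fun _ => (1 : ℝ)) LinearMap.id (by simp) x
  simpa [← inner_self_eq_norm_sq (𝕜 := ℂ), RCLike.re_to_complex] using this

private lemma weyl_rayleigh_le (b : OrthonormalBasis (Fin N) ℂ E) (μ : Fin N → ℝ)
    (T : E →ₗ[ℂ] E) (hT : ∀ i, T (b i) = (μ i : ℂ) • b i) (S : Set (Fin N)) (c : ℝ)
    (hc : ∀ i ∈ S, μ i ≤ c) {x : E} (hx : x ∈ Submodule.span ℂ (b '' S)) :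
    Complex.re ⟪x, T x⟫_ℂ ≤ c * ‖x‖ ^ 2 := by
  rw [weyl_rayleigh_formula b μ T hT x, weyl_norm_sq_formula b x, Finset.mul_sum]
  apply Finset.sum_le_sum
  intro i _
  by_cases hi : i ∈ S
  · exact mul_le_mul_of_nonneg_right (hc i hi) (Complex.normSq_nonneg _)
  · rw [weyl_repr_zero_of_mem_span b S hx hi]; simp

private lemma weyl_rayleigh_ge (b : OrthonormalBasis (Fin N) ℂ E) (μ : Fin N → ℝ)
    (T : E →ₗ[ℂ] E) (hT : ∀ i, T (b i) = (μ i : ℂ) • b i) (S : Set (Fin N)) (c : ℝ)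
    (hc : ∀ i ∈ S, c ≤ μ i) {x : E} (hx : x ∈ Submodule.span ℂ (b '' S)) :
    c * ‖x‖ ^ 2 ≤ Complex.re ⟪x, T x⟫_ℂ := by
  have := weyl_rayleigh_le b (fun i => -μ i) (-T) (by
      intro i; simp only [LinearMap.neg_apply, hT]; push_cast; rw [neg_smul]) S (-c)
    (fun i hi => neg_le_neg (hc i hi)) hx
  simp only [LinearMap.neg_apply, inner_neg_right, Complex.neg_re, neg_mul] at this
  linarith

private lemma weyl_exists_desc {N : ℕ} {A : Matrix (Fin N) (Fin N) ℂ} (hA : A.IsHermitian) :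
    ∃ (e : OrthonormalBasis (Fin N) ℂ (EuclideanSpace ℂ (Fin N))) (ν : Fin N → ℝ),
      Antitone ν ∧ (∀ i, Matrix.toEuclideanLin A (e i) = (ν i : ℂ) • e i) ∧
      ∀ (j : ℕ) (hj : j < N), hA.sortedEigenvaluesDesc j = ν ⟨j, hj⟩ := by
  set f := hA.eigenvalues with hf
  set σ := Tuple.sort f with hσ
  set ε : Equiv.Perm (Fin N) := (Fin.revPerm).trans σ with hε
  refine ⟨hA.eigenvectorBasis.reindex ε.symm, fun i => f (ε i), ?_, ?_, ?_⟩
  · intro i i' h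
    exact Tuple.monotone_sort f (Fin.rev_le_rev.mpr h)
  · intro i
    rw [OrthonormalBasis.reindex_apply, Equiv.symm_symm]
    apply (WithLp.equiv 2 (Fin N → ℂ)).injective
    simp only [WithLp.equiv_apply, Matrix.ofLp_toEuclideanLin_apply, WithLp.ofLp_smul]
    rw [hA.mulVec_eigenvectorBasis (ε i)]
    funext x
    simp [Pi.smul_apply, Complex.real_smul, hf]
  · intro j hj
    unfold Matrix.IsHermitian.sortedEigenvaluesDesc
    rw [weyl_sort_eq_ofFn, weyl_reverse_ofFn]
    have hlen : j < (List.ofFn ((f ∘ ⇑σ) ∘ Fin.rev)).length := by simpa using hj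
    rw [List.getD_eq_getElem?_getD, List.getElem?_eq_getElem hlen, Option.getD_some, List.getElem_ofFn]
    simp only [Function.comp_apply, hε]
    congr 1

private lemma weyl_finrank_span_onb (b : OrthonormalBasis (Fin N) ℂ E)
    (p : Fin N → Prop) [DecidablePred p] :
    Module.finrank ℂ (Submodule.span ℂ (b '' {i | p i})) = Fintype.card {i // p i} := by
  have hli : LinearIndependent ℂ (fun x : {i // p i} => b x.1) :=
    b.orthonormal.linearIndependent.comp Subtype.val Subtype.val_injective
  have himg : b '' {i | p i} = Set.range (fun x : {i // p i} => b x.1) := by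
    rw [Set.image_eq_range]; rfl
  rw [himg]
  exact finrank_span_eq_card hli

private lemma weyl_card_lt {N m : ℕ} (hm : m ≤ N) :
    Fintype.card {i : Fin N // (i : ℕ) < m} = m := by
  have : {i : Fin N // (i : ℕ) < m} ≃ Fin m :=
    { toFun := fun x => ⟨x.1, x.2⟩
      invFun := fun y => ⟨⟨y.1, lt_of_lt_of_le y.2 hm⟩, y.2⟩
      left_inv := fun x => by ext; rfl
      right_inv := fun y => by ext; rfl }
  rw [Fintype.card_congr this, Fintype.card_fin]

end Aux

/-- Weyl inequality (upper form): for Hermitian `H`, `V` and indices `0 ≤ k ≤ j ≤ N − 1`,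
`λ↓_j(H+V) ≤ λ↓_k(H) + λ↓_{j−k}(V)`. -/
theorem weyl_inequality_upper {N : ℕ} (H V : Matrix (Fin N) (Fin N) ℂ)
    (hH : H.IsHermitian) (hV : V.IsHermitian) :
    ∀ j k : ℕ, k ≤ j → j ≤ N - 1 →
      (hH.add hV).sortedEigenvaluesDesc j ≤
        hH.sortedEigenvaluesDesc k + hV.sortedEigenvaluesDesc (j - k) := by
  intro j k hkj hjN
  rcases Nat.eq_zero_or_pos N with hN0 | hNpos
  · subst hN0
    simp [Matrix.IsHermitian.sortedEigenvaluesDesc]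
  have hjN' : j < N := by omega
  have hkN : k < N := by omega
  have hmN : j - k < N := by omega
  classical
  obtain ⟨bW, νW, hWanti, hWeig, hWval⟩ := weyl_exists_desc (hH.add hV)
  obtain ⟨bH, νH, hHanti, hHeig, hHval⟩ := weyl_exists_desc hH
  obtain ⟨bV, νV, hVanti, hVeig, hVval⟩ := weyl_exists_desc hV
  set U : Submodule ℂ (EuclideanSpace ℂ (Fin N)) :=
    Submodule.span ℂ (bW '' {i | (i : ℕ) < j + 1}) with hU
  set SH : Submodule ℂ (EuclideanSpace ℂ (Fin N)) :=
    Submodule.span ℂ (bH '' {i | ¬ (i : ℕ) < k}) with hSH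
  set SV : Submodule ℂ (EuclideanSpace ℂ (Fin N)) :=
    Submodule.span ℂ (bV '' {i | ¬ (i : ℕ) < j - k}) with hSV
  have hNrank : Module.finrank ℂ (EuclideanSpace ℂ (Fin N)) = N := by
    simp [finrank_euclideanSpace]
  have hfU : Module.finrank ℂ U = j + 1 := by
    rw [hU, weyl_finrank_span_onb, weyl_card_lt (by omega)]
  have hfSH : Module.finrank ℂ SH = N - k := by
    rw [hSH, weyl_finrank_span_onb, Fintype.card_subtype_compl, Fintype.card_fin,
      weyl_card_lt (by omega)]
  have hfSV : Module.finrank ℂ SV = N - (j - k) := by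
    rw [hSV, weyl_finrank_span_onb, Fintype.card_subtype_compl, Fintype.card_fin,
      weyl_card_lt (by omega)]
  have h1 := Submodule.finrank_sup_add_finrank_inf_eq U SH
  have h1' : Module.finrank ℂ ↥(U ⊔ SH) ≤ N := le_trans (Submodule.finrank_le _) (le_of_eq hNrank)
  have h2 := Submodule.finrank_sup_add_finrank_inf_eq (U ⊓ SH) SV
  have h2' : Module.finrank ℂ ↥((U ⊓ SH) ⊔ SV) ≤ N := le_trans (Submodule.finrank_le _) (le_of_eq hNrank)
  have hpos : 0 < Module.finrank ℂ ↥(U ⊓ SH ⊓ SV) := by omega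
  have hne : U ⊓ SH ⊓ SV ≠ ⊥ := by
    intro h
    rw [h, finrank_bot] at hpos
    exact lt_irrefl 0 hpos
  obtain ⟨x, hxmem, hx0⟩ := Submodule.ne_bot_iff _ |>.mp hne
  obtain ⟨⟨hxU, hxSH⟩, hxSV⟩ := hxmem
  have hxnorm : (0 : ℝ) < ‖x‖ ^ 2 := pow_pos (norm_pos_iff.mpr hx0) 2
  set TW := Matrix.toEuclideanLin (H + V) with hTW
  set TH := Matrix.toEuclideanLin H with hTH
  set TV := Matrix.toEuclideanLin V with hTVd
  have e1 : νW ⟨j, hjN'⟩ * ‖x‖ ^ 2 ≤ Complex.re ⟪x, TW x⟫_ℂ := by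
    refine weyl_rayleigh_ge bW νW TW hWeig {i | (i : ℕ) < j + 1} _ ?_ hxU
    intro i hi
    exact hWanti (show i ≤ (⟨j, hjN'⟩ : Fin N) by
      simpa [Fin.le_def] using Nat.lt_succ_iff.mp hi)
  have e2 : Complex.re ⟪x, TH x⟫_ℂ ≤ νH ⟨k, hkN⟩ * ‖x‖ ^ 2 := by
    refine weyl_rayleigh_le bH νH TH hHeig {i | ¬ (i : ℕ) < k} _ ?_ hxSH
    intro i hi
    exact hHanti (show (⟨k, hkN⟩ : Fin N) ≤ i by simpa [Fin.le_def] using Nat.le_of_not_lt hi)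
  have e3 : Complex.re ⟪x, TV x⟫_ℂ ≤ νV ⟨j - k, hmN⟩ * ‖x‖ ^ 2 := by
    refine weyl_rayleigh_le bV νV TV hVeig {i | ¬ (i : ℕ) < j - k} _ ?_ hxSV
    intro i hi
    exact hVanti (show (⟨j - k, hmN⟩ : Fin N) ≤ i by
      simpa [Fin.le_def] using Nat.le_of_not_lt hi)
  have esum : Complex.re ⟪x, TW x⟫_ℂ = Complex.re ⟪x, TH x⟫_ℂ + Complex.re ⟪x, TV x⟫_ℂ := by
    have : TW x = TH x + TV x := by
      rw [hTW, hTH, hTVd, map_add]; rfl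
    rw [this, inner_add_right, Complex.add_re]
  rw [hWval j hjN', hHval k hkN, hVval (j - k) hmN]
  nlinarith [e1, e2, e3, esum, hxnorm]
end

section
/- (Weyl inequality, lower form) Let H and V be N×N Hermitian complex matrices, and let λ↓_0(M) ≥ λ↓_1(M) ≥ … ≥ λ↓_{N−1}(M) denote eigenvalues in decreasing order with multiplicity. Then for all indices j, k with 0 ≤ j ≤ k ≤ N−1 such that j − k + N − 1 ≤ N − 1, one has λ↓_j(H+V) ≥ λ↓_k(H) + λ↓_{j−k+N−1}(V). -/
open scoped Matrix.Norms.L2Operator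

open Matrix

namespace WeylAux

variable {N : ℕ}

/-! ### Sorted eigenvalues as an antitone tuple -/

noncomputable def mu {A : Matrix (Fin N) (Fin N) ℂ} (hA : A.IsHermitian) (k : Fin N) : ℝ :=
  hA.eigenvalues (Tuple.sort hA.eigenvalues k.rev)

lemma mu_antitone {A : Matrix (Fin N) (Fin N) ℂ} (hA : A.IsHermitian) :
    Antitone (mu hA) := fun a b hab =>
  Tuple.monotone_sort hA.eigenvalues (Fin.rev_le_rev.mpr hab)

lemma map_univ_perm (σ : Equiv.Perm (Fin N)) :
    Multiset.map ⇑σ Finset.univ.val = Finset.univ.val := by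
  conv_rhs => rw [← Finset.map_univ_equiv σ]
  simp [Finset.map_val]

theorem desc_eq_mu {A : Matrix (Fin N) (Fin N) ℂ} (hA : A.IsHermitian) (j : ℕ) (hj : j < N) :
    hA.sortedEigenvaluesDesc j = mu hA ⟨j, hj⟩ := by
  set g : Fin N → ℝ := hA.eigenvalues ∘ Tuple.sort hA.eigenvalues with hg
  have hL : (Finset.univ.val.map hA.eigenvalues).sort (· ≤ ·) = List.ofFn g := by
    apply fun h1 h2 h3 => List.Perm.eq_of_pairwise' (r := ((· ≤ ·) : ℝ → ℝ → Prop)) h2 h3 h1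
    · rw [← Multiset.coe_eq_coe, Multiset.sort_eq]
      have h1 : ((List.ofFn g : List ℝ) : Multiset ℝ) = Finset.univ.val.map g := by
        simp [List.ofFn_eq_map]
      rw [h1, hg, ← Multiset.map_map, map_univ_perm]
    · exact Multiset.pairwise_sort _ _
    · exact List.pairwise_ofFn.mpr fun i j hij => Tuple.monotone_sort hA.eigenvalues hij.le
  have hrev : (List.ofFn g).reverse = List.ofFn (fun i => g i.rev) := by
    apply List.ext_getElem
    · simp
    · intro i h1 h2
      simp only [List.getElem_reverse, List.getElem_ofFn]
      congr 1
      ext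
      simp at h1 h2 ⊢
      omega
  rw [Matrix.IsHermitian.sortedEigenvaluesDesc, hL, hrev,
    List.getD_eq_getElem _ _ (by simpa using hj), List.getElem_ofFn]
  rfl

/-! ### Quadratic forms -/

noncomputable def Q (A : Matrix (Fin N) (Fin N) ℂ) (x : Fin N → ℂ) : ℝ :=
  (star x ⬝ᵥ A *ᵥ x).re

noncomputable def n2 (x : Fin N → ℂ) : ℝ := ∑ i, Complex.normSq (x i)

lemma Q_add (A B : Matrix (Fin N) (Fin N) ℂ) (x : Fin N → ℂ) :
    Q (A + B) x = Q A x + Q B x := by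
  simp [Q, add_mulVec, dotProduct_add]

lemma n2_pos {x : Fin N → ℂ} (hx : x ≠ 0) : 0 < n2 x := by
  have h : ∃ i, x i ≠ 0 := by
    by_contra h
    push_neg at h
    exact hx (funext h)
  obtain ⟨i, hi⟩ := h
  have : 0 < Complex.normSq (x i) := Complex.normSq_pos.mpr hi
  exact lt_of_lt_of_le this (Finset.single_le_sum (f := fun i => Complex.normSq (x i))
    (fun j _ => Complex.normSq_nonneg _) (Finset.mem_univ i))

lemma quad_eq {A : Matrix (Fin N) (Fin N) ℂ} (hA : A.IsHermitian) (c : Fin N → ℂ) :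
    Q A ((hA.eigenvectorUnitary : Matrix (Fin N) (Fin N) ℂ) *ᵥ c)
      = ∑ i, hA.eigenvalues i * Complex.normSq (c i) := by
  set U : Matrix (Fin N) (Fin N) ℂ := (hA.eigenvectorUnitary : Matrix (Fin N) (Fin N) ℂ) with hU
  have hsU : star U * U = 1 := Unitary.coe_star_mul_self hA.eigenvectorUnitary
  set D : Matrix (Fin N) (Fin N) ℂ := diagonal (RCLike.ofReal ∘ hA.eigenvalues) with hD
  have key : star (U *ᵥ c) ⬝ᵥ (A *ᵥ (U *ᵥ c)) = star c ⬝ᵥ (D *ᵥ c) := by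
    conv_lhs => rw [hA.spectral_theorem, Unitary.conjStarAlgAut_apply]
    rw [mulVec_mulVec, star_mulVec, ← dotProduct_mulVec, mulVec_mulVec]
    rw [show Uᴴ = star U from rfl, ← hU, ← hD,
      mul_assoc (U * D) (star U) U, hsU, mul_one, ← mul_assoc, hsU, one_mul]
  rw [Q, key, hD]
  simp only [dotProduct, mulVec_diagonal, Pi.star_apply, Complex.re_sum, Function.comp]
  congr 1
  ext i
  have h2 : (starRingEnd ℂ) (c i) * ((hA.eigenvalues i : ℂ) * c i)
      = ((hA.eigenvalues i * Complex.normSq (c i) : ℝ) : ℂ) := by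
    push_cast
    rw [Complex.normSq_eq_conj_mul_self]
    ring
  rw [show star (c i) = (starRingEnd ℂ) (c i) from rfl,
    show (RCLike.ofReal (hA.eigenvalues i) : ℂ) = ((hA.eigenvalues i : ℝ) : ℂ) from rfl, h2,
    Complex.ofReal_re]

lemma n2_eq (x : Fin N → ℂ) : n2 x = (star x ⬝ᵥ x).re := by
  simp only [n2, dotProduct, Pi.star_apply, Complex.re_sum]
  congr 1
  ext i
  rw [show star (x i) = (starRingEnd ℂ) (x i) from rfl,
    ← Complex.ofReal_re (Complex.normSq (x i)), Complex.normSq_eq_conj_mul_self]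

lemma n2_mulVec {U : Matrix (Fin N) (Fin N) ℂ} (hsU : star U * U = 1) (c : Fin N → ℂ) :
    n2 (U *ᵥ c) = n2 c := by
  rw [n2_eq, n2_eq]
  congr 1
  rw [star_mulVec, ← dotProduct_mulVec, mulVec_mulVec, show Uᴴ = star U from rfl, hsU, one_mulVec]

lemma quad_ge {A : Matrix (Fin N) (Fin N) ℂ} (hA : A.IsHermitian) (c : Fin N → ℂ) (r : ℝ)
    (h : ∀ i, c i ≠ 0 → r ≤ hA.eigenvalues i) :
    r * n2 c ≤ Q A ((hA.eigenvectorUnitary : Matrix (Fin N) (Fin N) ℂ) *ᵥ c) := by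
  rw [quad_eq, n2, Finset.mul_sum]
  apply Finset.sum_le_sum
  intro i _
  by_cases hi : c i = 0
  · simp [hi]
  · exact mul_le_mul_of_nonneg_right (h i hi) (Complex.normSq_nonneg _)

lemma quad_le {A : Matrix (Fin N) (Fin N) ℂ} (hA : A.IsHermitian) (c : Fin N → ℂ) (r : ℝ)
    (h : ∀ i, c i ≠ 0 → hA.eigenvalues i ≤ r) :
    Q A ((hA.eigenvectorUnitary : Matrix (Fin N) (Fin N) ℂ) *ᵥ c) ≤ r * n2 c := by
  rw [quad_eq, n2, Finset.mul_sum]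
  apply Finset.sum_le_sum
  intro i _
  by_cases hi : c i = 0
  · simp [hi]
  · exact mul_le_mul_of_nonneg_right (h i hi) (Complex.normSq_nonneg _)

/-! ### Coordinate subspaces and their images -/

noncomputable def coordSub (N : ℕ) (S : Finset (Fin N)) : Submodule ℂ (Fin N → ℂ) :=
  Submodule.span ℂ ((fun i => Pi.single i (1:ℂ)) '' ↑S)

lemma mem_coordSub {S : Finset (Fin N)} {c : Fin N → ℂ} :
    c ∈ coordSub N S ↔ ∀ i ∉ S, c i = 0 := by
  constructor
  · intro hc
    have : coordSub N S ≤ {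
      carrier := {x : Fin N → ℂ | ∀ i ∉ S, x i = 0},
      add_mem' := fun ha hb i hi => by simp [ha i hi, hb i hi],
      zero_mem' := fun i hi => rfl,
      smul_mem' := fun a x hx i hi => by simp [hx i hi] } := by
      rw [coordSub, Submodule.span_le]
      rintro y ⟨i, hiS, rfl⟩ j hj
      have hne : j ≠ i := by rintro rfl; exact hj hiS
      exact Pi.single_eq_of_ne hne 1
    exact this hc
  · intro hc
    have : c = ∑ i ∈ S, c i • (Pi.single i 1 : Fin N → ℂ) := by
      ext j
      by_cases hj : j ∈ S
      · rw [Finset.sum_apply]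
        rw [Finset.sum_eq_single j]
        · simp
        · intro b hb hbj
          have : (Pi.single b 1 : Fin N → ℂ) j = 0 := Pi.single_eq_of_ne (Ne.symm hbj) 1
          simp [this]
        · intro h; exact absurd hj h
      · rw [Finset.sum_apply, Finset.sum_eq_zero, hc j hj]
        intro b hb
        have hne : j ≠ b := by rintro rfl; exact hj hb
        have : (Pi.single b 1 : Fin N → ℂ) j = 0 := Pi.single_eq_of_ne hne 1
        simp [this]
    rw [this]
    exact Submodule.sum_mem _ fun i hi =>
      Submodule.smul_mem _ _ (Submodule.subset_span ⟨i, hi, rfl⟩)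

lemma finrank_coordSub (S : Finset (Fin N)) :
    Module.finrank ℂ (coordSub N S) = S.card := by
  have hb : ⇑(Pi.basisFun ℂ (Fin N)) = fun i : Fin N => (Pi.single i 1 : Fin N → ℂ) :=
    funext fun i => Pi.basisFun_apply ℂ (Fin N) i
  have hinj : Function.Injective (fun i : Fin N => (Pi.single i 1 : Fin N → ℂ)) := by
    rw [← hb]; exact (Pi.basisFun ℂ (Fin N)).injective
  have hli : LinearIndependent ℂ
      ((↑) : ((fun i : Fin N => (Pi.single i 1 : Fin N → ℂ)) '' ↑S) → (Fin N → ℂ)) := by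
    refine (LinearIndepOn.mono (R := ℂ) (v := id) (s := Set.range (fun i : Fin N => (Pi.single i 1 : Fin N → ℂ))) ?_ (Set.image_subset_range _ _) :)
    have : LinearIndependent ℂ (fun i : Fin N => (Pi.single i 1 : Fin N → ℂ)) := by
      rw [← hb]; exact (Pi.basisFun ℂ (Fin N)).linearIndependent
    exact (linearIndepOn_id_range_iff hinj).mpr this
  rw [coordSub, finrank_span_set_eq_card hli]
  rw [Set.toFinset_image]
  rw [Finset.card_image_of_injective _ hinj]
  simp

noncomputable def mulVecEquiv {U : Matrix (Fin N) (Fin N) ℂ} (hsU : star U * U = 1)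
    (hUs : U * star U = 1) : (Fin N → ℂ) ≃ₗ[ℂ] (Fin N → ℂ) :=
  LinearEquiv.ofLinear U.mulVecLin (star U).mulVecLin
    (by rw [← Matrix.mulVecLin_mul, hUs, Matrix.mulVecLin_one])
    (by rw [← Matrix.mulVecLin_mul, hsU, Matrix.mulVecLin_one])

noncomputable def W {U : Matrix (Fin N) (Fin N) ℂ} (hsU : star U * U = 1)
    (hUs : U * star U = 1) (S : Finset (Fin N)) : Submodule ℂ (Fin N → ℂ) :=
  Submodule.map (mulVecEquiv hsU hUs : (Fin N → ℂ) →ₗ[ℂ] (Fin N → ℂ)) (coordSub N S)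

lemma mem_W {U : Matrix (Fin N) (Fin N) ℂ} {hsU : star U * U = 1}
    {hUs : U * star U = 1} {S : Finset (Fin N)} {x : Fin N → ℂ} :
    x ∈ W hsU hUs S ↔ ∃ c, (∀ i ∉ S, c i = 0) ∧ U *ᵥ c = x := by
  constructor
  · rintro ⟨c, hc, rfl⟩
    exact ⟨c, mem_coordSub.mp hc, rfl⟩
  · rintro ⟨c, hc, rfl⟩
    exact ⟨c, mem_coordSub.mpr hc, rfl⟩

lemma finrank_W {U : Matrix (Fin N) (Fin N) ℂ} (hsU : star U * U = 1)
    (hUs : U * star U = 1) (S : Finset (Fin N)) :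
    Module.finrank ℂ (W hsU hUs S) = S.card := by
  rw [W, LinearEquiv.finrank_map_eq, finrank_coordSub]

lemma exists_triple_inter (p q r : Submodule ℂ (Fin N → ℂ))
    (h : 2 * N + 1 ≤ Module.finrank ℂ p + Module.finrank ℂ q + Module.finrank ℂ r) :
    ∃ x, x ∈ p ∧ x ∈ q ∧ x ∈ r ∧ x ≠ 0 := by
  have hN : ∀ s : Submodule ℂ (Fin N → ℂ), Module.finrank ℂ s ≤ N := by
    intro s
    simpa using s.finrank_le
  have h1 : Module.finrank ℂ p + Module.finrank ℂ q
      ≤ Module.finrank ℂ (p ⊓ q : Submodule ℂ (Fin N → ℂ)) + N := by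
    rw [← Submodule.finrank_sup_add_finrank_inf_eq p q]
    have := hN (p ⊔ q)
    omega
  have h2 : Module.finrank ℂ (p ⊓ q : Submodule ℂ (Fin N → ℂ)) + Module.finrank ℂ r
      ≤ Module.finrank ℂ ((p ⊓ q) ⊓ r : Submodule ℂ (Fin N → ℂ)) + N := by
    rw [← Submodule.finrank_sup_add_finrank_inf_eq (p ⊓ q) r]
    have := hN ((p ⊓ q) ⊔ r)
    omega
  have h3 : 0 < Module.finrank ℂ ((p ⊓ q) ⊓ r : Submodule ℂ (Fin N → ℂ)) := by omega
  have hne : ((p ⊓ q) ⊓ r : Submodule ℂ (Fin N → ℂ)) ≠ ⊥ := by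
    intro hbot
    rw [hbot] at h3
    simp at h3
  obtain ⟨x, hx, hx0⟩ := Submodule.exists_mem_ne_zero_of_ne_bot hne
  exact ⟨x, hx.1.1, hx.1.2, hx.2, hx0⟩

/-! ### Counting eigenvalue level sets -/

lemma card_ge_of_level_upper {A : Matrix (Fin N) (Fin N) ℂ} (hA : A.IsHermitian) (k : Fin N) :
    k.val + 1 ≤ (Finset.univ.filter (fun i => mu hA k ≤ hA.eigenvalues i)).card := by
  have := Finset.card_le_card_of_injOn (f := fun t : Fin N => Tuple.sort hA.eigenvalues t.rev)
    (s := Finset.Iic k)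
    (t := Finset.univ.filter (fun i => mu hA k ≤ hA.eigenvalues i))
    (fun t ht => by
      simp only [Finset.coe_filter, Set.mem_setOf_eq, Finset.mem_univ, true_and]
      exact mu_antitone hA (Finset.mem_Iic.mp ht))
    (fun a _ b _ hab => Fin.rev_injective ((Tuple.sort hA.eigenvalues).injective hab))
  simpa [Fin.card_Iic] using this

lemma card_ge_of_level_lower {A : Matrix (Fin N) (Fin N) ℂ} (hA : A.IsHermitian) (j : Fin N) :
    N - j.val ≤ (Finset.univ.filter (fun i => hA.eigenvalues i ≤ mu hA j)).card := by
  have := Finset.card_le_card_of_injOn (f := fun t : Fin N => Tuple.sort hA.eigenvalues t.rev)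
    (s := Finset.Ici j)
    (t := Finset.univ.filter (fun i => hA.eigenvalues i ≤ mu hA j))
    (fun t ht => by
      simp only [Finset.coe_filter, Set.mem_setOf_eq, Finset.mem_univ, true_and]
      exact mu_antitone hA (Finset.mem_Ici.mp ht))
    (fun a _ b _ hab => Fin.rev_injective ((Tuple.sort hA.eigenvalues).injective hab))
  simpa [Fin.card_Ici] using this

/-! ### Core Weyl inequality -/

theorem weyl_core {H V : Matrix (Fin N) (Fin N) ℂ} (hH : H.IsHermitian) (hV : V.IsHermitian)
    (j k m : Fin N) (hsum : k.val + m.val + 1 = N + j.val) :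
    mu hH k + mu hV m ≤ mu (hH.add hV) j := by
  have hC : (H + V).IsHermitian := hH.add hV
  -- unitaries
  have hsU_H : star (hH.eigenvectorUnitary : Matrix (Fin N) (Fin N) ℂ)
      * (hH.eigenvectorUnitary : Matrix (Fin N) (Fin N) ℂ) = 1 :=
    Unitary.coe_star_mul_self hH.eigenvectorUnitary
  have hUs_H : (hH.eigenvectorUnitary : Matrix (Fin N) (Fin N) ℂ)
      * star (hH.eigenvectorUnitary : Matrix (Fin N) (Fin N) ℂ) = 1 :=
    Unitary.coe_mul_star_self hH.eigenvectorUnitary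
  have hsU_V : star (hV.eigenvectorUnitary : Matrix (Fin N) (Fin N) ℂ)
      * (hV.eigenvectorUnitary : Matrix (Fin N) (Fin N) ℂ) = 1 :=
    Unitary.coe_star_mul_self hV.eigenvectorUnitary
  have hUs_V : (hV.eigenvectorUnitary : Matrix (Fin N) (Fin N) ℂ)
      * star (hV.eigenvectorUnitary : Matrix (Fin N) (Fin N) ℂ) = 1 :=
    Unitary.coe_mul_star_self hV.eigenvectorUnitary
  have hsU_C : star (hC.eigenvectorUnitary : Matrix (Fin N) (Fin N) ℂ)
      * (hC.eigenvectorUnitary : Matrix (Fin N) (Fin N) ℂ) = 1 :=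
    Unitary.coe_star_mul_self hC.eigenvectorUnitary
  have hUs_C : (hC.eigenvectorUnitary : Matrix (Fin N) (Fin N) ℂ)
      * star (hC.eigenvectorUnitary : Matrix (Fin N) (Fin N) ℂ) = 1 :=
    Unitary.coe_mul_star_self hC.eigenvectorUnitary
  set SH := Finset.univ.filter (fun i => mu hH k ≤ hH.eigenvalues i) with hSH
  set SV := Finset.univ.filter (fun i => mu hV m ≤ hV.eigenvalues i) with hSV
  set SC := Finset.univ.filter (fun i => hC.eigenvalues i ≤ mu hC j) with hSC
  obtain ⟨x, hxH, hxV, hxC, hx0⟩ := exists_triple_inter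
    (W hsU_H hUs_H SH) (W hsU_V hUs_V SV) (W hsU_C hUs_C SC)
    (by
      rw [finrank_W, finrank_W, finrank_W]
      have c1 := card_ge_of_level_upper hH k
      have c2 := card_ge_of_level_upper hV m
      have c3 := card_ge_of_level_lower hC j
      have hj := j.isLt
      rw [← hSH] at c1
      rw [← hSV] at c2
      rw [← hSC] at c3
      omega)
  obtain ⟨c1, hc1, hxc1⟩ := mem_W.mp hxH
  obtain ⟨c2, hc2, hxc2⟩ := mem_W.mp hxV
  obtain ⟨c3, hc3, hxc3⟩ := mem_W.mp hxC
  have hn2x : 0 < n2 x := n2_pos hx0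
  -- lower bounds for H and V
  have bH : mu hH k * n2 x ≤ Q H x := by
    rw [← hxc1, n2_mulVec hsU_H]
    apply quad_ge
    intro i hi
    by_contra hlt
    exact hi (hc1 i (by simp only [hSH, Finset.mem_filter, Finset.mem_univ, true_and]; exact hlt))
  have bV : mu hV m * n2 x ≤ Q V x := by
    rw [← hxc2, n2_mulVec hsU_V]
    apply quad_ge
    intro i hi
    by_contra hlt
    exact hi (hc2 i (by simp only [hSV, Finset.mem_filter, Finset.mem_univ, true_and]; exact hlt))
  have bC : Q (H + V) x ≤ mu hC j * n2 x := by
    rw [← hxc3, n2_mulVec hsU_C]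
    apply quad_le
    intro i hi
    by_contra hlt
    exact hi (hc3 i (by simp only [hSC, Finset.mem_filter, Finset.mem_univ, true_and]; exact hlt))
  have key : (mu hH k + mu hV m) * n2 x ≤ mu hC j * n2 x := by
    have := Q_add H V x
    nlinarith [bH, bV, bC]
  exact le_of_mul_le_mul_right key hn2x

end WeylAux

/-- Weyl inequality (lower form): for Hermitian `H`, `V` and indices `0 ≤ j ≤ k ≤ N − 1`
(so that the integer `j − k + N − 1`, written below as `j + (N − 1) − k`, is at most `N − 1`),
`λ↓_j(H+V) ≥ λ↓_k(H) + λ↓_{j−k+N−1}(V)`. -/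
theorem weyl_inequality_lower {N : ℕ} (H V : Matrix (Fin N) (Fin N) ℂ)
    (hH : H.IsHermitian) (hV : V.IsHermitian) :
    ∀ j k : ℕ, j ≤ k → k ≤ N - 1 → j + (N - 1) - k ≤ N - 1 →
      (hH.add hV).sortedEigenvaluesDesc j ≥
        hH.sortedEigenvaluesDesc k + hV.sortedEigenvaluesDesc (j + (N - 1) - k) := by
  intro j k hjk hkN hmN
  rcases Nat.eq_zero_or_pos N with hN | hN
  · subst hN
    simp only [Matrix.IsHermitian.sortedEigenvaluesDesc]
    have : (Finset.univ : Finset (Fin 0)).val = 0 := rfl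
    simp [this]
  · have hjN : j < N := lt_of_le_of_lt (le_trans hjk hkN) (by omega)
    have hkN' : k < N := lt_of_le_of_lt hkN (by omega)
    have hmN' : j + (N - 1) - k < N := lt_of_le_of_lt hmN (by omega)
    rw [WeylAux.desc_eq_mu (hH.add hV) j hjN, WeylAux.desc_eq_mu hH k hkN',
      WeylAux.desc_eq_mu hV _ hmN']
    exact WeylAux.weyl_core hH hV ⟨j, hjN⟩ ⟨k, hkN'⟩ ⟨j + (N - 1) - k, hmN'⟩ (by simp only [Fin.val_mk]; omega)
end

section
/- Let A be a d×d Hermitian complex matrix with d ≥ 2 and B an m×m Hermitian complex matrix. Then the gap between the two smallest eigenvalues of the Kronecker sum is at most the gap of A: λ_1(A ⊗ 1_m + 1_d ⊗ B) − λ_0(A ⊗ 1_m + 1_d ⊗ B) ≤ λ_1(A) − λ_0(A). -/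
open scoped Kronecker

open Polynomial Matrix in
private lemma my_charpoly_conj {n : Type*} [Fintype n] [DecidableEq n] (U V M : Matrix n n ℂ)
    (h1 : U * V = 1) : (U * M * V).charpoly = M.charpoly := by
  have hmap : (U.map C) * (V.map C) = 1 := by
    rw [← Matrix.map_mul, h1]; simp
  have key : charmatrix (U * M * V) = (U.map C) * charmatrix M * (V.map C) := by
    unfold charmatrix
    have hc : ∀ N : Matrix n n ℂ[X], N * Matrix.scalar n (X : ℂ[X]) = Matrix.scalar n (X : ℂ[X]) * N := by
      intro N
      exact (Matrix.scalar_commute (X : ℂ[X]) (fun r => Commute.all _ _) N).symm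
    rw [Matrix.mul_sub, Matrix.sub_mul]
    congr 1
    · rw [mul_assoc, ← hc, ← mul_assoc, hmap, one_mul]
    · simp only [RingHom.mapMatrix_apply, ← Matrix.map_mul]
  rw [Matrix.charpoly, Matrix.charpoly, key, det_mul, det_mul]
  have : (U.map C).det * (V.map C).det = 1 := by
    rw [← det_mul, hmap, det_one]
  calc (U.map C).det * (charmatrix M).det * (V.map C).det
      = (charmatrix M).det * ((U.map C).det * (V.map C).det) := by ring
    _ = (charmatrix M).det := by rw [this, mul_one]

open Polynomial Matrix in
private lemma my_charpoly_diagonal {n : Type*} [Fintype n] [DecidableEq n] (v : n → ℂ) :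
    (diagonal v).charpoly = ∏ i, (X - C (v i)) := by
  have : charmatrix (diagonal v) = diagonal (fun i => (X : ℂ[X]) - C (v i)) := by
    ext i j
    by_cases h : i = j
    · subst h; simp [charmatrix_apply_eq]
    · simp [charmatrix_apply_ne _ _ _ h, diagonal_apply_ne _ h]
  rw [Matrix.charpoly, this, det_diagonal]

open Polynomial Matrix in
private lemma my_eig_multiset {n : Type*} [Fintype n] [DecidableEq n] {H : Matrix n n ℂ}
    (hH : H.IsHermitian) (U : Matrix n n ℂ) (h1 : U * star U = 1) (f : n → ℝ)
    (h : H = U * diagonal (Complex.ofReal ∘ f) * star U) :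
    Finset.univ.val.map hH.eigenvalues = Finset.univ.val.map f := by
  have e1 : H.charpoly = ∏ i, (X - C ((f i : ℂ))) := by
    rw [h, my_charpoly_conj _ _ _ h1, my_charpoly_diagonal]
    simp [Function.comp]
  have e2 : H.charpoly = ∏ i, (X - C ((hH.eigenvalues i : ℂ))) := by
    conv_lhs => rw [hH.spectral_theorem, Unitary.conjStarAlgAut_apply]
    rw [my_charpoly_conj _ _ _ (Matrix.mem_unitaryGroup_iff.mp hH.eigenvectorUnitary.2),
      my_charpoly_diagonal]
    simp [Function.comp]
  have r1 : Multiset.map (fun i => ((hH.eigenvalues i : ℂ))) Finset.univ.val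
      = Multiset.map (fun i => ((f i : ℂ))) Finset.univ.val := by
    have hr := congrArg Polynomial.roots (e2.symm.trans e1)
    rwa [Finset.prod_eq_multiset_prod, Finset.prod_eq_multiset_prod,
      show (fun i => X - C ((hH.eigenvalues i : ℂ))) = (fun a => X - C a) ∘ (fun i => ((hH.eigenvalues i : ℂ))) from rfl,
      show (fun i => X - C ((f i : ℂ))) = (fun a => X - C a) ∘ (fun i => ((f i : ℂ))) from rfl,
      ← Multiset.map_map, ← Multiset.map_map,
      roots_multiset_prod_X_sub_C, roots_multiset_prod_X_sub_C] at hr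
  apply Multiset.map_injective (f := (Complex.ofReal)) Complex.ofReal_injective
  rw [Multiset.map_map, Multiset.map_map]
  exact r1

private lemma my_sort_zero_le {s : Multiset ℝ} {a : ℝ} (ha : a ∈ s) :
    (s.sort (· ≤ ·)).getD 0 0 ≤ a := by
  have hmem : a ∈ s.sort (· ≤ ·) := (Multiset.mem_sort _).2 ha
  have hs := Multiset.pairwise_sort s (· ≤ ·)
  rcases hl : s.sort (· ≤ ·) with _ | ⟨x, t⟩
  · simp [hl] at hmem
  · rw [hl] at hmem hs
    simp only [List.getD_cons_zero]
    rcases List.mem_cons.mp hmem with h | h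
    · exact h.ge
    · exact (List.pairwise_cons.mp hs).1 a h

private lemma my_sort_mem {s : Multiset ℝ} (h : 0 < Multiset.card s) :
    (s.sort (· ≤ ·)).getD 0 0 ∈ s := by
  rcases hl : s.sort (· ≤ ·) with _ | ⟨x, t⟩
  · have := Multiset.length_sort (α := ℝ) (· ≤ ·) (s := s)
    rw [hl] at this; simp at this; omega
  · rw [← Multiset.mem_sort (· ≤ ·), hl]
    simp

private lemma my_sort_pair {s : Multiset ℝ} (h : 2 ≤ Multiset.card s) :
    (s.sort (· ≤ ·)).getD 0 0 ≤ (s.sort (· ≤ ·)).getD 1 0 ∧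
      ({(s.sort (· ≤ ·)).getD 0 0, (s.sort (· ≤ ·)).getD 1 0} : Multiset ℝ) ≤ s := by
  have hlen : 2 ≤ (s.sort (· ≤ ·)).length := by
    rw [Multiset.length_sort]; exact h
  have hs := Multiset.pairwise_sort s (· ≤ ·)
  have heq := Multiset.sort_eq s (· ≤ ·)
  rcases hl : s.sort (· ≤ ·) with _ | ⟨x, _ | ⟨y, t⟩⟩
  · rw [hl] at hlen; simp at hlen
  · rw [hl] at hlen; simp at hlen
  · rw [hl] at hs heq
    simp only [List.getD_cons_zero, List.getD_cons_succ]
    constructor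
    · exact (List.pairwise_cons.mp hs).1 y List.mem_cons_self
    · rw [← heq]
      show ({x, y} : Multiset ℝ) ≤ (x ::ₘ y ::ₘ ↑t)
      exact Multiset.cons_le_cons x (Multiset.cons_le_cons y (Multiset.zero_le _))

private lemma my_sort_one_le {s : Multiset ℝ} {a b : ℝ} (hab : a ≤ b)
    (h : ({a, b} : Multiset ℝ) ≤ s) : (s.sort (· ≤ ·)).getD 1 0 ≤ b := by
  by_contra hlt
  push_neg at hlt
  have hcount2 : 2 ≤ Multiset.countP (fun x => x ≤ b) s := by
    have hle := Multiset.countP_le_of_le (fun x => x ≤ b) h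
    have : Multiset.countP (fun x => x ≤ b) ({a, b} : Multiset ℝ) = 2 := by
      rw [Multiset.insert_eq_cons, show ({b} : Multiset ℝ) = b ::ₘ 0 from rfl,
        Multiset.countP_cons, Multiset.countP_cons]
      simp [hab]
    omega
  have hcard : 2 ≤ Multiset.card s := le_trans hcount2 (Multiset.countP_le_card _ _)
  have hlen : 2 ≤ (s.sort (· ≤ ·)).length := by
    rw [Multiset.length_sort]; exact hcard
  have hs := Multiset.pairwise_sort s (· ≤ ·)
  have heq := Multiset.sort_eq s (· ≤ ·)
  rcases hl : s.sort (· ≤ ·) with _ | ⟨x, _ | ⟨y, t⟩⟩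
  · rw [hl] at hlen; simp at hlen
  · rw [hl] at hlen; simp at hlen
  · rw [hl] at hs heq hlt
    simp only [List.getD_cons_zero, List.getD_cons_succ] at hlt
    have hy : b < y := hlt
    have ht : ∀ z ∈ t, b < z := fun z hz =>
      lt_of_lt_of_le hy ((List.pairwise_cons.mp (List.pairwise_cons.mp hs).2).1 z hz)
    have : Multiset.countP (fun x => x ≤ b) s ≤ 1 := by
      rw [← heq]
      show Multiset.countP (fun x => x ≤ b) (x ::ₘ y ::ₘ ↑t) ≤ 1
      rw [Multiset.countP_cons, Multiset.countP_cons]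
      have h1 : Multiset.countP (fun x => x ≤ b) (↑t : Multiset ℝ) = 0 := by
        rw [Multiset.countP_eq_zero]
        intro z hz
        exact not_le.mpr (ht z (by simpa using hz))
      have h2 : ¬ (y ≤ b) := not_le.mpr hy
      simp [h1, h2]
      split <;> omega
    omega

open Matrix in
private lemma my_star_kron {d m : ℕ} (M : Matrix (Fin d) (Fin d) ℂ) (N : Matrix (Fin m) (Fin m) ℂ) :
    star (M ⊗ₖ N) = star M ⊗ₖ star N := by
  ext ⟨i, j⟩ ⟨k, l⟩
  simp [Matrix.star_eq_conjTranspose, Matrix.conjTranspose_apply, mul_comm]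

open Matrix in
private lemma my_kron_decomp {d m : ℕ} (A : Matrix (Fin d) (Fin d) ℂ) (B : Matrix (Fin m) (Fin m) ℂ)
    (hA : A.IsHermitian) (hB : B.IsHermitian) :
    A ⊗ₖ (1 : Matrix (Fin m) (Fin m) ℂ) + (1 : Matrix (Fin d) (Fin d) ℂ) ⊗ₖ B =
      ((hA.eigenvectorUnitary : Matrix (Fin d) (Fin d) ℂ) ⊗ₖ (hB.eigenvectorUnitary : Matrix (Fin m) (Fin m) ℂ)) *
        diagonal (Complex.ofReal ∘ fun p : Fin d × Fin m => hA.eigenvalues p.1 + hB.eigenvalues p.2) *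
        star ((hA.eigenvectorUnitary : Matrix (Fin d) (Fin d) ℂ) ⊗ₖ (hB.eigenvectorUnitary : Matrix (Fin m) (Fin m) ℂ)) := by
  set Ua := (hA.eigenvectorUnitary : Matrix (Fin d) (Fin d) ℂ)
  set Ub := (hB.eigenvectorUnitary : Matrix (Fin m) (Fin m) ℂ)
  set Da := diagonal ((RCLike.ofReal : ℝ → ℂ) ∘ hA.eigenvalues) with hDa
  set Db := diagonal ((RCLike.ofReal : ℝ → ℂ) ∘ hB.eigenvalues) with hDb
  have hUa : Ua * star Ua = 1 := Matrix.mem_unitaryGroup_iff.mp hA.eigenvectorUnitary.2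
  have hUb : Ub * star Ub = 1 := Matrix.mem_unitaryGroup_iff.mp hB.eigenvectorUnitary.2
  have h1 : A ⊗ₖ (1 : Matrix (Fin m) (Fin m) ℂ) = (Ua * Da * star Ua) ⊗ₖ (Ub * 1 * star Ub) := by
    have hsp := hA.spectral_theorem
    rw [Unitary.conjStarAlgAut_apply] at hsp
    rw [← hsp, mul_one, hUb]
  have h2 : (1 : Matrix (Fin d) (Fin d) ℂ) ⊗ₖ B = (Ua * 1 * star Ua) ⊗ₖ (Ub * Db * star Ub) := by
    have hsp := hB.spectral_theorem
    rw [Unitary.conjStarAlgAut_apply] at hsp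
    rw [← hsp, mul_one, hUa]
  rw [h1, h2, my_star_kron, mul_kronecker_mul, mul_kronecker_mul,
    mul_kronecker_mul, mul_kronecker_mul, ← Matrix.add_mul, ← Matrix.mul_add]
  congr 1
  congr 1
  rw [show (1 : Matrix (Fin m) (Fin m) ℂ) = diagonal (fun _ => 1) from (diagonal_one).symm,
    show (1 : Matrix (Fin d) (Fin d) ℂ) = diagonal (fun _ => 1) from (diagonal_one).symm,
    hDa, hDb, diagonal_kronecker_diagonal, diagonal_kronecker_diagonal, diagonal_add]
  funext p
  funext q
  simp [Matrix.diagonal, Function.comp, RCLike.ofReal]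

/-- The eigenvalues of a Hermitian matrix, listed in increasing order (with multiplicity):
`sortedEigenvalues hA j` is `λ_j`. Out-of-range indices yield the junk value `0`. -/
noncomputable def Matrix.IsHermitian.sortedEigenvalues {n : Type*} [Fintype n] [DecidableEq n]
    {A : Matrix n n ℂ} (hA : A.IsHermitian) (j : ℕ) : ℝ :=
  ((Finset.univ.val.map hA.eigenvalues).sort (· ≤ ·)).getD j 0

/-- The gap between the two smallest eigenvalues of the Kronecker sum `A ⊗ 1_m + 1_d ⊗ B`
is at most the gap of `A`:
`λ_1(A ⊗ 1_m + 1_d ⊗ B) − λ_0(A ⊗ 1_m + 1_d ⊗ B) ≤ λ_1(A) − λ_0(A)`. -/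
theorem gap_kroneckerSum_le {d m : ℕ} (hd : 2 ≤ d) (hm : 0 < m)
    (A : Matrix (Fin d) (Fin d) ℂ) (B : Matrix (Fin m) (Fin m) ℂ)
    (hA : A.IsHermitian) (hB : B.IsHermitian)
    (hK : (A ⊗ₖ (1 : Matrix (Fin m) (Fin m) ℂ) +
      (1 : Matrix (Fin d) (Fin d) ℂ) ⊗ₖ B).IsHermitian) :
    hK.sortedEigenvalues 1 - hK.sortedEigenvalues 0 ≤
      hA.sortedEigenvalues 1 - hA.sortedEigenvalues 0 := by
  classical
  set g : Fin d × Fin m → ℝ := fun p => hA.eigenvalues p.1 + hB.eigenvalues p.2 with hg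
  -- the unitary for K
  have hUa : (hA.eigenvectorUnitary : Matrix (Fin d) (Fin d) ℂ) * star (hA.eigenvectorUnitary : Matrix (Fin d) (Fin d) ℂ) = 1 :=
    Matrix.mem_unitaryGroup_iff.mp hA.eigenvectorUnitary.2
  have hUb : (hB.eigenvectorUnitary : Matrix (Fin m) (Fin m) ℂ) * star (hB.eigenvectorUnitary : Matrix (Fin m) (Fin m) ℂ) = 1 :=
    Matrix.mem_unitaryGroup_iff.mp hB.eigenvectorUnitary.2
  have hW : ((hA.eigenvectorUnitary : Matrix (Fin d) (Fin d) ℂ) ⊗ₖ (hB.eigenvectorUnitary : Matrix (Fin m) (Fin m) ℂ)) *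
      star ((hA.eigenvectorUnitary : Matrix (Fin d) (Fin d) ℂ) ⊗ₖ (hB.eigenvectorUnitary : Matrix (Fin m) (Fin m) ℂ)) = 1 := by
    rw [my_star_kron, ← Matrix.mul_kronecker_mul, hUa, hUb, Matrix.one_kronecker_one]
  have hKmul : Finset.univ.val.map hK.eigenvalues = Finset.univ.val.map g :=
    my_eig_multiset hK _ hW g (my_kron_decomp A B hA hB)
  -- multisets
  set tA : Multiset ℝ := Finset.univ.val.map hA.eigenvalues with htA
  set sK : Multiset ℝ := Finset.univ.val.map hK.eigenvalues with hsK
  have hcardA : Multiset.card tA = d := by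
    simp [htA]
  have hcardK : 2 ≤ Multiset.card sK := by
    have : Multiset.card sK = d * m := by simp [hsK]
    rw [this]
    calc 2 = 2 * 1 := by ring
      _ ≤ d * m := Nat.mul_le_mul hd hm
  -- the two smallest eigenvalues of A
  obtain ⟨habA, hpairA⟩ := my_sort_pair (s := tA) (by omega)
  set a := hA.sortedEigenvalues 0 with ha
  set b := hA.sortedEigenvalues 1 with hb
  have haa : a = (tA.sort (· ≤ ·)).getD 0 0 := rfl
  have hbb : b = (tA.sort (· ≤ ·)).getD 1 0 := rfl
  rw [← haa, ← hbb] at habA hpairA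
  -- minimum eigenvalue of B
  obtain ⟨j0, -, hj0⟩ := Finset.exists_min_image Finset.univ hB.eigenvalues
    (Finset.univ_nonempty_iff.mpr (by exact Fin.pos_iff_nonempty.mp hm))
  set μ := hB.eigenvalues j0 with hμ
  -- {a + μ, b + μ} ≤ sK
  have hsub : ({a + μ, b + μ} : Multiset ℝ) ≤ sK := by
    have step1 : Multiset.map (fun x => x + μ) ({a, b} : Multiset ℝ) ≤
        Multiset.map (fun x => x + μ) tA := Multiset.map_le_map hpairA
    have step2 : Multiset.map (fun x => x + μ) tA =
        Finset.univ.val.map (fun i : Fin d => hA.eigenvalues i + μ) := by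
      rw [htA, Multiset.map_map]; rfl
    have step3 : (Finset.univ.val.map (fun i : Fin d => (i, j0) : Fin d → Fin d × Fin m)) ≤
        (Finset.univ.val : Multiset (Fin d × Fin m)) := by
      apply Multiset.le_iff_subset ?_ |>.mpr
      · intro x hx
        simp
      · exact Multiset.Nodup.map (fun i i' hii' => (Prod.mk.injEq _ _ _ _ ▸ hii').1)
          Finset.univ.nodup
    have step4 : Multiset.map g (Finset.univ.val.map (fun i : Fin d => (i, j0))) ≤
        Multiset.map g Finset.univ.val := Multiset.map_le_map step3
    have step5 : Multiset.map g (Finset.univ.val.map (fun i : Fin d => (i, j0))) =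
        Finset.univ.val.map (fun i : Fin d => hA.eigenvalues i + μ) := by
      rw [Multiset.map_map]; rfl
    have : ({a + μ, b + μ} : Multiset ℝ) = Multiset.map (fun x => x + μ) ({a, b} : Multiset ℝ) := by
      simp
    rw [this, hKmul]
    calc Multiset.map (fun x => x + μ) ({a, b} : Multiset ℝ)
        ≤ Multiset.map (fun x => x + μ) tA := step1
      _ = Finset.univ.val.map (fun i : Fin d => hA.eigenvalues i + μ) := step2
      _ = Multiset.map g (Finset.univ.val.map (fun i : Fin d => (i, j0))) := step5.symm
      _ ≤ Multiset.map g Finset.univ.val := step4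
  -- upper bound on λ₁(K)
  have hup : hK.sortedEigenvalues 1 ≤ b + μ :=
    my_sort_one_le (add_le_add habA le_rfl) hsub
  -- lower bound on λ₀(K)
  have hlow : a + μ ≤ hK.sortedEigenvalues 0 := by
    have hmem : hK.sortedEigenvalues 0 ∈ sK := my_sort_mem (by omega)
    rw [hKmul] at hmem
    obtain ⟨p, -, hp⟩ := Multiset.mem_map.mp hmem
    rw [← hp, hg]
    have h1 : a ≤ hA.eigenvalues p.1 :=
      my_sort_zero_le (Multiset.mem_map_of_mem _ (Finset.mem_univ p.1))
    have h2 : μ ≤ hB.eigenvalues p.2 := hj0 p.2 (Finset.mem_univ _)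
    exact add_le_add h1 h2
  linarith
end

section
/- (Assumption 1 holds for Gaussian ensembles) Let n ≥ 1 and let G be a random n×n real matrix whose n² entries are independent standard real Gaussians (mean 0, variance 1), and set M = (G + Gᵀ)/2, a random real symmetric matrix. Then for every real number a and every ε > 0, the probability that all n eigenvalues of M lie in the open interval (a − ε, a + ε) is strictly positive. -/
open MeasureTheory ProbabilityTheory Matrix

/-- The symmetrization `M = (G + Gᵀ)/2` of a square real matrix `G`. -/
noncomputable def symPart {n : ℕ} (G : Matrix (Fin n) (Fin n) ℝ) : Matrix (Fin n) (Fin n) ℝ :=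
  (2 : ℝ)⁻¹ • (G + Gᵀ)

/-- The symmetrization of a real matrix is Hermitian (i.e. symmetric), so it has `n` real
eigenvalues counted with multiplicity. -/
theorem symPart_isHermitian {n : ℕ} (G : Matrix (Fin n) (Fin n) ℝ) :
    (symPart G).IsHermitian := by
  unfold symPart Matrix.IsHermitian
  ext i j
  simp [Matrix.conjTranspose_apply, Matrix.transpose_apply]
  ring

lemma gaussianReal_Ioo_pos {c d : ℝ} (h : c < d) : 0 < gaussianReal 0 1 (Set.Ioo c d) := by
  rw [gaussianReal_apply 0 one_ne_zero, pos_iff_ne_zero]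
  intro h0
  have hae := (lintegral_eq_zero_iff (measurable_gaussianPDF 0 1)).mp h0
  rw [Filter.EventuallyEq, ae_iff] at hae
  have h1 : {x : ℝ | ¬ gaussianPDF 0 1 x = (0 : ℝ → ENNReal) x} = Set.univ := by
    ext x; simp [(gaussianPDF_pos 0 one_ne_zero x).ne']
  rw [h1, Measure.restrict_apply_univ, Real.volume_Ioo] at hae
  exact (ENNReal.ofReal_pos.mpr (sub_pos.mpr h)).ne' hae

lemma herm_eigen_gersh {n : ℕ} (A : Matrix (Fin n) (Fin n) ℝ) (hA : A.IsHermitian) (i : Fin n) :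
    ∃ k, |hA.eigenvalues i - A k k| ≤ ∑ j ∈ Finset.univ.erase k, |A k j| := by
  have h1 := hA.eigenvalues_mem_spectrum_real i
  rw [← AlgEquiv.spectrum_eq
      (Matrix.toLinAlgEquiv' : Matrix (Fin n) (Fin n) ℝ ≃ₐ[ℝ] _) A] at h1
  have h2 : Module.End.HasEigenvalue (Matrix.toLin' A) (hA.eigenvalues i) := by
    have h3 := Module.End.HasEigenvalue.of_mem_spectrum h1
    have he : Matrix.toLin' A = Matrix.toLinAlgEquiv' A := by
      apply LinearMap.ext; intro v
      simp [Matrix.toLin'_apply, Matrix.toLinAlgEquiv'_apply]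
    rwa [he]
  obtain ⟨k, hk⟩ := eigenvalue_mem_ball h2
  refine ⟨k, ?_⟩
  rw [Metric.mem_closedBall, Real.dist_eq] at hk
  simpa [Real.norm_eq_abs] using hk

/-- Assumption 1 holds for Gaussian ensembles: if `G` is a random `n×n` real matrix whose `n²`
entries are i.i.d. standard real Gaussians (the underlying measure being the product over the
entries of the standard Gaussian of mean 0 and variance 1) and `M = (G + Gᵀ)/2`, then for every
real `a` and every `ε > 0`, the probability that all `n` eigenvalues of `M` lie in the open
interval `(a − ε, a + ε)` is strictly positive. -/
theorem gaussian_eigenvalues_near_scalar_pos (n : ℕ) (hn : 1 ≤ n) (a ε : ℝ) (hε : 0 < ε) :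
    0 < (Measure.pi fun _ : Fin n => Measure.pi fun _ : Fin n => gaussianReal 0 1)
      {G : Fin n → Fin n → ℝ |
        ∀ i : Fin n,
          (symPart_isHermitian (Matrix.of G)).eigenvalues i ∈ Set.Ioo (a - ε) (a + ε)} := by
  have hnpos : (0 : ℝ) < n := by exact_mod_cast hn
  set δ : ℝ := ε / n with hδdef
  have hδ : 0 < δ := div_pos hε hnpos
  set t : Fin n → Fin n → ℝ := fun i j => if i = j then a else 0 with ht
  set S : Set (Fin n → Fin n → ℝ) :=
    Set.pi Set.univ (fun i => Set.pi Set.univ (fun j => Set.Ioo (t i j - δ) (t i j + δ)))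
    with hS
  have hsub : S ⊆ {G : Fin n → Fin n → ℝ |
      ∀ i : Fin n,
        (symPart_isHermitian (Matrix.of G)).eigenvalues i ∈ Set.Ioo (a - ε) (a + ε)} := by
    intro G hG
    have hGij : ∀ i j, |G i j - t i j| < δ := by
      intro i j
      have := hG i (Set.mem_univ i) j (Set.mem_univ j)
      rw [Set.mem_Ioo] at this
      rw [abs_sub_lt_iff]
      constructor <;> linarith [this.1, this.2]
    set A := symPart (Matrix.of G) with hA
    have hAij : ∀ i j, |A i j - t i j| < δ := by
      intro i j
      have h1 := hGij i j
      have h2 := hGij j i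
      have htsymm : t j i = t i j := by
        simp only [ht]; by_cases h : i = j <;> simp [h, Ne.symm]
      rw [htsymm] at h2
      have hAe : A i j = (G i j + G j i) / 2 := by
        simp [hA, symPart, Matrix.transpose_apply, Matrix.smul_apply, Matrix.add_apply]
        ring
      rw [hAe]
      rw [abs_sub_lt_iff] at h1 h2 ⊢
      constructor <;> linarith [h1.1, h1.2, h2.1, h2.2]
    intro i
    obtain ⟨k, hk⟩ := herm_eigen_gersh A (symPart_isHermitian (Matrix.of G)) i
    have hsum : ∑ j ∈ Finset.univ.erase k, |A k j| ≤ (n - 1) * δ := by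
      have hcard : (Finset.univ.erase k).card = n - 1 := by
        simp [Finset.card_erase_of_mem]
      calc ∑ j ∈ Finset.univ.erase k, |A k j|
          ≤ ∑ j ∈ Finset.univ.erase k, δ := by
            refine Finset.sum_le_sum fun j hj => ?_
            have hjk : j ≠ k := Finset.ne_of_mem_erase hj
            have := hAij k j
            have htkj : t k j = 0 := by simp [ht, (Ne.symm hjk)]
            rw [htkj, sub_zero] at this
            exact this.le
        _ = (n - 1 : ℕ) * δ := by rw [Finset.sum_const, hcard]; simp [nsmul_eq_mul]
        _ ≤ (n - 1) * δ := by
            have : ((n - 1 : ℕ) : ℝ) ≤ (n : ℝ) - 1 := by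
              rw [Nat.cast_sub hn]; simp
            exact mul_le_mul_of_nonneg_right this hδ.le
    have hdiag : |A k k - a| < δ := by
      have := hAij k k
      simpa [ht] using this
    have hnδ : (n : ℝ) * δ = ε := by
      rw [hδdef, mul_div_assoc', mul_comm, mul_div_assoc, div_self hnpos.ne', mul_one]
    have hfinal : |(symPart_isHermitian (Matrix.of G)).eigenvalues i - a| < ε := by
      have h1 : |(symPart_isHermitian (Matrix.of G)).eigenvalues i - a|
          ≤ |(symPart_isHermitian (Matrix.of G)).eigenvalues i - A k k| + |A k k - a| := by
        have := abs_sub_le ((symPart_isHermitian (Matrix.of G)).eigenvalues i) (A k k) a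
        exact this
      have h2 : |(symPart_isHermitian (Matrix.of G)).eigenvalues i - A k k|
          ≤ (n - 1) * δ := le_trans hk hsum
      nlinarith [h1, h2, hdiag]
    rw [Set.mem_Ioo]
    rw [abs_sub_lt_iff] at hfinal
    constructor <;> linarith [hfinal.1, hfinal.2]
  refine lt_of_lt_of_le ?_ (measure_mono hsub)
  rw [hS, Measure.pi_pi]
  rw [pos_iff_ne_zero, Finset.prod_ne_zero_iff]
  intro i _
  rw [Measure.pi_pi, Finset.prod_ne_zero_iff]
  intro j _
  exact (gaussianReal_Ioo_pos (by linarith)).ne'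
end
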